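/- For every Nim position (x₁,…,xₙ) of non-negative integers, the StrNim game on the string c₁^{x₁} c₂^{x₂} ··· cₙ^{xₙ}, with pairwise distinct characters cᵢ, is a P-position if and only if x₁ ⊕ x₂ ⊕ ··· ⊕ xₙ = 0, where ⊕ is bitwise XOR. -/

import Mathlib

/-- A move in StrNim: remove a nonempty contiguous block of a single repeated character. -/
def StrMove {α : Type*} (s t : List α) : Prop :=
  ∃ (x : List α) (c : α) (k : ℕ) (y : List α),
    1 ≤ k ∧ s = x ++ List.replicate k c ++ y ∧ t = x ++ y

/-- N-positions of StrNim: there is a move to a position all of whose successors are N-positions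
(i.e. a move to a P-position). -/
inductive NPos {α : Type*} : List α → Prop where
  | intro {s t : List α} (h : StrMove s t) (ht : ∀ u, StrMove t u → NPos u) : NPos s

/-- P-positions of StrNim: every successor is an N-position. -/
def PPos {α : Type*} (s : List α) : Prop := ∀ t, StrMove s t → NPos t

namespace StrNimAux

variable {α : Type*}

def str (L : List (ℕ × α)) : List α := (L.map fun p => List.replicate p.1 p.2).flatten

@[simp] lemma str_nil : str ([] : List (ℕ × α)) = [] := rfl

@[simp] lemma str_cons (p : ℕ × α) (L : List (ℕ × α)) :
    str (p :: L) = List.replicate p.1 p.2 ++ str L := by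
  simp [str]

lemma str_append (L₁ L₂ : List (ℕ × α)) : str (L₁ ++ L₂) = str L₁ ++ str L₂ := by
  simp [str]

lemma str_mid (L₁ L₂ : List (ℕ × α)) (k : ℕ) (c : α) :
    str (L₁ ++ (k, c) :: L₂) = str L₁ ++ List.replicate k c ++ str L₂ := by
  simp [str_append, List.append_assoc]

lemma mem_str {e : α} {L : List (ℕ × α)} (h : e ∈ str L) : e ∈ L.map Prod.snd := by
  induction L with
  | nil => simp [str] at h
  | cons p L ih =>
    rw [str_cons] at h
    rcases List.mem_append.1 h with h | h
    · simp [List.eq_of_mem_replicate h]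
    · simp only [List.map_cons, List.mem_cons]
      exact Or.inr (ih h)

lemma no_move_nil {t : List α} (h : StrMove [] t) : False := by
  obtain ⟨x, d, m, y, hm, hs, _⟩ := h
  have := congrArg List.length hs
  simp at this
  omega

lemma repl_prefix {c : α} : ∀ (m k : ℕ) (b r : List α), c ∉ r →
    List.replicate m c ++ b = List.replicate k c ++ r →
    m ≤ k ∧ b = List.replicate (k - m) c ++ r := by
  intro m
  induction m with
  | zero =>
    intro k b r _ h
    simp only [List.replicate_zero, List.nil_append] at h
    exact ⟨Nat.zero_le _, by simpa using h⟩
  | succ m ih =>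
    intro k b r hc h
    cases k with
    | zero =>
      exfalso
      simp only [List.replicate_succ, List.replicate_zero, List.cons_append,
        List.nil_append] at h
      exact hc (h ▸ List.mem_cons_self)
    | succ k =>
      simp only [List.replicate_succ, List.cons_append] at h
      injection h with _ h2
      obtain ⟨h3, h4⟩ := ih k b r hc h2
      exact ⟨Nat.succ_le_succ h3, by simpa [Nat.succ_sub_succ] using h4⟩

lemma block_decomp {c d : α} {m : ℕ} (hm : 1 ≤ m) :
    ∀ (a : List α) (k : ℕ) (b r : List α), c ∉ r →
    a ++ List.replicate m d ++ b = List.replicate k c ++ r →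
    (d = c ∧ ∃ i, i + m ≤ k ∧ a = List.replicate i c ∧
        b = List.replicate (k - (i + m)) c ++ r) ∨
    (∃ a', a = List.replicate k c ++ a' ∧ r = a' ++ List.replicate m d ++ b) := by
  intro a
  induction a with
  | nil =>
    intro k b r hc h
    simp only [List.nil_append] at h
    cases k with
    | zero =>
      right
      exact ⟨[], by simp, by simpa using h.symm⟩
    | succ k =>
      obtain ⟨m', rfl⟩ : ∃ m', m = m' + 1 := ⟨m - 1, by omega⟩
      simp only [List.replicate_succ, List.cons_append] at h
      injection h with h1 h2
      subst h1
      obtain ⟨h3, h4⟩ := repl_prefix m' k b r hc h2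
      left
      refine ⟨rfl, 0, by omega, rfl, ?_⟩
      rw [h4]
      congr 2
      omega
  | cons e a ih =>
    intro k b r hc h
    cases k with
    | zero =>
      right
      refine ⟨e :: a, by simp, ?_⟩
      simpa using h.symm
    | succ k =>
      simp only [List.replicate_succ, List.cons_append] at h
      injection h with h1 h2
      subst h1
      rcases ih k b r hc h2 with ⟨rfl, i, hi, rfl, hb⟩ | ⟨a', rfl, hr⟩
      · left
        refine ⟨rfl, i + 1, by omega, by simp [List.replicate_succ], ?_⟩
        rw [hb]
        congr 2
        omega
      · right
        exact ⟨a', by simp [List.replicate_succ], hr⟩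

lemma move_str : ∀ {L : List (ℕ × α)} {t : List α}, (L.map Prod.snd).Nodup →
    StrMove (str L) t →
    ∃ (L₁ : List (ℕ × α)) (k : ℕ) (c : α) (j : ℕ) (L₂ : List (ℕ × α)),
      L = L₁ ++ (k, c) :: L₂ ∧ j < k ∧ t = str (L₁ ++ (j, c) :: L₂) := by
  intro L
  induction L with
  | nil =>
    intro t _ h
    exact absurd h no_move_nil
  | cons p L ih =>
    obtain ⟨k, c⟩ := p
    intro t hnd h
    obtain ⟨x, d, m, y, hm, hs, ht⟩ := h
    simp only [List.map_cons, List.nodup_cons] at hnd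
    have hc : c ∉ str L := fun hmem => hnd.1 (mem_str hmem)
    rw [str_cons] at hs
    rcases block_decomp hm x k y (str L) hc hs.symm with
      ⟨rfl, i, hi, rfl, hy⟩ | ⟨a', rfl, hr⟩
    · refine ⟨[], k, d, k - m, L, by simp, by omega, ?_⟩
      rw [ht, hy]
      simp only [List.nil_append, str_cons]
      rw [← List.append_assoc, ← List.replicate_add]
      congr 2
      omega
    · have hmv : StrMove (str L) (a' ++ y) := ⟨a', d, m, y, hm, hr, rfl⟩
      obtain ⟨L₁, k₀, c₀, j, L₂, hL, hj, ht'⟩ := ih hnd.2 hmv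
      refine ⟨(k, c) :: L₁, k₀, c₀, j, L₂, by rw [hL]; simp, hj, ?_⟩
      rw [ht, List.cons_append, str_cons, ← ht', List.append_assoc]

def nimXor (l : List ℕ) : ℕ := l.foldr (· ^^^ ·) 0

@[simp] lemma nimXor_nil : nimXor ([] : List ℕ) = 0 := rfl

@[simp] lemma nimXor_cons (a : ℕ) (l : List ℕ) : nimXor (a :: l) = a ^^^ nimXor l := rfl

lemma foldr_xor_init (l : List ℕ) (i : ℕ) : l.foldr (· ^^^ ·) i = nimXor l ^^^ i := by
  induction l with
  | nil => simp
  | cons a l ih => simp [List.foldr_cons, ih, Nat.xor_assoc]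

lemma nimXor_append (l₁ l₂ : List ℕ) : nimXor (l₁ ++ l₂) = nimXor l₁ ^^^ nimXor l₂ := by
  rw [nimXor, List.foldr_append, foldr_xor_init]
  rfl

lemma nimXor_mid (A B : List ℕ) (k : ℕ) :
    nimXor (A ++ k :: B) = nimXor A ^^^ (k ^^^ nimXor B) := by
  rw [nimXor_append, nimXor_cons]

lemma exists_testBit_mem : ∀ (L : List (ℕ × α)) (d : ℕ),
    (nimXor (L.map Prod.fst)).testBit d = true →
    ∃ L₁ k c L₂, L = L₁ ++ (k, c) :: L₂ ∧ k.testBit d = true := by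
  intro L
  induction L with
  | nil => intro d h; simp [Nat.zero_testBit] at h
  | cons p L ih =>
    intro d h
    obtain ⟨a, e⟩ := p
    simp only [List.map_cons, nimXor_cons, Nat.testBit_xor] at h
    by_cases ha : a.testBit d = true
    · exact ⟨[], a, e, L, by simp, ha⟩
    · have : (nimXor (L.map Prod.fst)).testBit d = true := by
        simp only [Bool.not_eq_true] at ha
        simpa [ha] using h
      obtain ⟨L₁, k, c, L₂, hL, hk⟩ := ih d this
      exact ⟨(a, e) :: L₁, k, c, L₂, by rw [hL]; simp, hk⟩

lemma xor_triple (a b c : ℕ) : a ^^^ ((b ^^^ (a ^^^ (b ^^^ c))) ^^^ c) = 0 := by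
  apply Nat.eq_of_testBit_eq
  intro i
  simp [Nat.testBit_xor]
  cases a.testBit i <;> cases b.testBit i <;> cases c.testBit i <;> simp

lemma xor_mid_cancel {A B j k : ℕ} (h : A ^^^ (j ^^^ B) = A ^^^ (k ^^^ B)) : j = k := by
  have h2 := congrArg (fun z => A ^^^ z ^^^ B) h
  apply Nat.eq_of_testBit_eq
  intro i
  have h3 := congrArg (fun z => z.testBit i) h2
  simp only [Nat.testBit_xor] at h3
  revert h3
  cases A.testBit i <;> cases B.testBit i <;> cases j.testBit i <;> cases k.testBit i <;> simp

lemma bouton {L : List (ℕ × α)} (h : nimXor (L.map Prod.fst) ≠ 0) :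
    ∃ L₁ k c j L₂, L = L₁ ++ (k, c) :: L₂ ∧ j < k ∧
      nimXor ((L₁ ++ (j, c) :: L₂).map Prod.fst) = 0 := by
  obtain ⟨d, hd, hgt⟩ := Nat.exists_most_significant_bit h
  obtain ⟨L₁, k, c, L₂, rfl, hk⟩ := exists_testBit_mem L d hd
  set X := nimXor ((L₁ ++ (k, c) :: L₂).map Prod.fst) with hX
  refine ⟨L₁, k, c, k ^^^ X, L₂, rfl, ?_, ?_⟩
  · apply Nat.lt_of_testBit d
    · simp [Nat.testBit_xor, hk, hd]
    · exact hk
    · intro j hj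
      simp [Nat.testBit_xor, hgt j hj]
  · have h1 : X = nimXor (L₁.map Prod.fst) ^^^ (k ^^^ nimXor (L₂.map Prod.fst)) := by
      rw [hX]
      simp only [List.map_append, List.map_cons]
      exact nimXor_mid _ _ _
    simp only [List.map_append, List.map_cons]
    rw [nimXor_mid, h1]
    exact xor_triple _ _ _

lemma length_str (L : List (ℕ × α)) : (str L).length = (L.map Prod.fst).sum := by
  induction L with
  | nil => simp
  | cons p L ih => simp [str_cons, ih]

lemma nimXor_of_str_nil : ∀ {L : List (ℕ × α)}, str L = [] → nimXor (L.map Prod.fst) = 0 := by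
  intro L
  induction L with
  | nil => simp
  | cons p L ih =>
    intro h
    rw [str_cons, List.append_eq_nil_iff] at h
    obtain ⟨h1, h2⟩ := h
    have : p.1 = 0 := by simpa using congrArg List.length h1
    simp [this, ih h2]

lemma main : ∀ (N : ℕ) (L : List (ℕ × α)), (L.map Prod.snd).Nodup → (str L).length ≤ N →
    ((nimXor (L.map Prod.fst) = 0 → PPos (str L)) ∧
     (nimXor (L.map Prod.fst) ≠ 0 → NPos (str L))) := by
  intro N
  induction N with
  | zero =>
    intro L _ hlen
    have hnil : str L = [] := List.length_eq_zero_iff.1 (Nat.le_zero.1 hlen)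
    constructor
    · intro _ t ht
      rw [hnil] at ht
      exact absurd ht no_move_nil
    · intro hXne
      exact absurd (nimXor_of_str_nil hnil) hXne
  | succ N ih =>
    intro L hnd hlen
    constructor
    · intro hX t ht
      obtain ⟨L₁, k, c, j, L₂, rfl, hj, rfl⟩ := move_str hnd ht
      have hnd' : ((L₁ ++ (j, c) :: L₂).map Prod.snd).Nodup := by
        simpa using hnd
      have hlen' : (str (L₁ ++ (j, c) :: L₂)).length ≤ N := by
        have e1 := length_str (L₁ ++ (j, c) :: L₂)
        have e2 := length_str (L₁ ++ (k, c) :: L₂)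
        simp only [List.map_append, List.map_cons, List.sum_append, List.sum_cons] at e1 e2
        omega
      have hX' : nimXor ((L₁ ++ (j, c) :: L₂).map Prod.fst) ≠ 0 := by
        intro h0
        simp only [List.map_append, List.map_cons] at h0 hX
        rw [nimXor_mid] at h0 hX
        rw [← hX] at h0
        exact absurd (xor_mid_cancel h0) (by omega)
      exact (ih _ hnd' hlen').2 hX'
    · intro hX
      obtain ⟨L₁, k, c, j, L₂, rfl, hj, h0⟩ := bouton hX
      have hmv : StrMove (str (L₁ ++ (k, c) :: L₂)) (str (L₁ ++ (j, c) :: L₂)) := by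
        refine ⟨str L₁ ++ List.replicate j c, c, k - j, str L₂, by omega, ?_, ?_⟩
        · rw [str_mid]
          simp only [List.append_assoc]
          congr 1
          rw [← List.append_assoc, ← List.replicate_add]
          congr 2
          omega
        · rw [str_mid, List.append_assoc]
      have hnd' : ((L₁ ++ (j, c) :: L₂).map Prod.snd).Nodup := by
        simpa using hnd
      have hlen' : (str (L₁ ++ (j, c) :: L₂)).length ≤ N := by
        have e1 := length_str (L₁ ++ (j, c) :: L₂)
        have e2 := length_str (L₁ ++ (k, c) :: L₂)
        simp only [List.map_append, List.map_cons, List.sum_append, List.sum_cons] at e1 e2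
        omega
      exact NPos.intro hmv ((ih _ hnd' hlen').1 h0)

lemma npos_not_ppos : ∀ {s : List α}, NPos s → ¬ PPos s := by
  intro s h
  induction h with
  | intro hmove _ ih =>
    intro hp
    obtain ⟨h2, ht2⟩ := hp _ hmove
    exact ih _ h2 ht2

end StrNimAux

/-- For a Nim position `(x₁, …, xₙ)` and pairwise distinct characters `cᵢ`, the StrNim game on
`c₁^{x₁} ⋯ cₙ^{xₙ}` is a P-position iff `x₁ ⊕ ⋯ ⊕ xₙ = 0` (bitwise XOR). -/
theorem stmt_19 {α : Type*} (n : ℕ) (x : Fin n → ℕ) (c : Fin n → α)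
    (hc : Function.Injective c) :
    PPos ((List.ofFn fun i => List.replicate (x i) (c i)).flatten) ↔
      (List.ofFn x).foldr (· ^^^ ·) 0 = 0 := by
  set L : List (ℕ × α) := List.ofFn (fun i => (x i, c i)) with hL
  have hstr : StrNimAux.str L = (List.ofFn fun i => List.replicate (x i) (c i)).flatten := by
    rw [StrNimAux.str, hL, List.map_ofFn]
    rfl
  have hfst : L.map Prod.fst = List.ofFn x := by
    rw [hL, List.map_ofFn]; rfl
  have hsnd : (L.map Prod.snd).Nodup := by
    rw [hL, List.map_ofFn]
    exact List.nodup_ofFn.2 hc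
  have hxor : StrNimAux.nimXor (L.map Prod.fst) = (List.ofFn x).foldr (· ^^^ ·) 0 := by
    rw [hfst]; rfl
  rw [← hstr, ← hxor]
  constructor
  · intro hp
    by_contra hX
    exact StrNimAux.npos_not_ppos
      ((StrNimAux.main (StrNimAux.str L).length L hsnd le_rfl).2 hX) hp
  · intro hX
    exact (StrNimAux.main (StrNimAux.str L).length L hsnd le_rfl).1 hX
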